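/- Let S be a finite type, 0 ≤ γ < 1, and for each t ∈ ℕ let ρ_t, σ_t : S → ℝ be probability mass functions with D_TV(ρ_t, σ_t) ≤ t·c·Δ/2 + D₀ for constants c, Δ, D₀ ≥ 0. Let g : ℕ → S → ℝ satisfy |g_t(s)| ≤ ψ for all t, s. Then |∑_{t=0}^∞ γ^t (∑_s (ρ_t(s) − σ_t(s)) g_t(s))| ≤ γ·c·ψ·Δ/(1−γ)² + 2ψ·D₀/(1−γ). -/
import Mathlib


theorem stmt_17 {S : Type*} [Fintype S] (γ c Δ D₀ ψ : ℝ)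
    (hγ0 : 0 ≤ γ) (hγ1 : γ < 1) (hc : 0 ≤ c) (hΔ : 0 ≤ Δ) (hD₀ : 0 ≤ D₀)
    (ρ σ : ℕ → S → ℝ) (g : ℕ → S → ℝ)
    (hρ0 : ∀ t s, 0 ≤ ρ t s) (hρ1 : ∀ t, ∑ s, ρ t s = 1)
    (hσ0 : ∀ t s, 0 ≤ σ t s) (hσ1 : ∀ t, ∑ s, σ t s = 1)
    (hTV : ∀ t : ℕ, (1 / 2) * ∑ s, |ρ t s - σ t s| ≤ t * c * Δ / 2 + D₀)
    (hg : ∀ t s, |g t s| ≤ ψ) :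
    |∑' t : ℕ, γ ^ t * ∑ s, (ρ t s - σ t s) * g t s| ≤
      γ * c * ψ * Δ / (1 - γ) ^ 2 + 2 * ψ * D₀ / (1 - γ) := by
  have hS : Nonempty S := by
    by_contra h
    rw [not_nonempty_iff] at h
    have := hρ1 0
    simp at this
  obtain ⟨s₀⟩ := hS
  have hψ : 0 ≤ ψ := le_trans (abs_nonneg _) (hg 0 s₀)
  have hγn : ‖γ‖ < 1 := by rwa [Real.norm_eq_abs, abs_of_nonneg hγ0]
  set f : ℕ → ℝ := fun t => γ ^ t * ∑ s, (ρ t s - σ t s) * g t s with hf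
  set b : ℕ → ℝ := fun t => c * Δ * ψ * ((t : ℝ) * γ ^ t) + 2 * D₀ * ψ * γ ^ t with hb
  have key : ∀ t, |f t| ≤ b t := by
    intro t
    have h1 : |∑ s, (ρ t s - σ t s) * g t s| ≤ ψ * ((t : ℝ) * c * Δ + 2 * D₀) := by
      calc |∑ s, (ρ t s - σ t s) * g t s| ≤ ∑ s, |(ρ t s - σ t s) * g t s| :=
            Finset.abs_sum_le_sum_abs _ _
        _ ≤ ∑ s, |ρ t s - σ t s| * ψ := by
            apply Finset.sum_le_sum
            intro s _
            rw [abs_mul]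
            exact mul_le_mul_of_nonneg_left (hg t s) (abs_nonneg _)
        _ = (∑ s, |ρ t s - σ t s|) * ψ := by rw [Finset.sum_mul]
        _ ≤ ((t : ℝ) * c * Δ + 2 * D₀) * ψ := by
            apply mul_le_mul_of_nonneg_right _ hψ
            have := hTV t
            linarith
        _ = ψ * ((t : ℝ) * c * Δ + 2 * D₀) := by ring
    have hpow : (0:ℝ) ≤ γ ^ t := pow_nonneg hγ0 t
    calc |f t| = γ ^ t * |∑ s, (ρ t s - σ t s) * g t s| := by
          rw [hf, abs_mul, abs_of_nonneg hpow]
      _ ≤ γ ^ t * (ψ * ((t : ℝ) * c * Δ + 2 * D₀)) :=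
          mul_le_mul_of_nonneg_left h1 hpow
      _ = b t := by rw [hb]; ring
  have hs1 : Summable (fun t : ℕ => (t : ℝ) * γ ^ t) := by
    have := summable_pow_mul_geometric_of_norm_lt_one (R := ℝ) 1 hγn
    simpa using this
  have hs2 : Summable (fun t : ℕ => γ ^ t) := summable_geometric_of_norm_lt_one hγn
  have hsb : Summable b := ((hs1.mul_left _).add (hs2.mul_left _))
  have hsfa : Summable (fun t => |f t|) :=
    Summable.of_nonneg_of_le (fun t => abs_nonneg _) key hsb
  have hsf : Summable f := by rwa [summable_abs_iff] at hsfa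
  have h2 : |∑' t, f t| ≤ ∑' t, |f t| := by
    have h := norm_tsum_le_tsum_norm (f := f) (by simpa only [Real.norm_eq_abs] using hsfa)
    simpa only [Real.norm_eq_abs] using h
  have h3 : ∑' t, |f t| ≤ ∑' t, b t := Summable.tsum_le_tsum key hsfa hsb
  have h4 : ∑' t, b t = γ * c * ψ * Δ / (1 - γ) ^ 2 + 2 * ψ * D₀ / (1 - γ) := by
    rw [hb, Summable.tsum_add (hs1.mul_left _) (hs2.mul_left _), tsum_mul_left, tsum_mul_left,
      tsum_coe_mul_geometric_of_norm_lt_one hγn, tsum_geometric_of_lt_one hγ0 hγ1]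
    ring
  calc |∑' t, f t| ≤ ∑' t, |f t| := h2
    _ ≤ ∑' t, b t := h3
    _ = _ := h4
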